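/- Let A be a real symmetric n×n matrix and H an orthogonal matrix satisfying Hᵀ A H = diag(D₁, D₂) block-diagonal with D₁ ∈ ℝ^{k×k} and D₂ ∈ ℝ^{(n-k)×(n-k)}. If Ĥ = H(I + E)⁻¹ with ‖E‖ < 1, then Ĥᵀ A Ĥ = D - D E - Eᵀ D + Φ₂ where D = diag(D₁,D₂) and ‖Φ₂‖ ≤ χ(ε)‖A‖ε² with ε = ‖E‖ and χ(ε) = (3-2ε)/(1-ε)². -/

import Mathlib

set_option maxHeartbeats 1000000

open Matrix
open scoped Matrix.Norms.L2Operator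

/-- If `A` is symmetric, `H` orthogonal with `Hᵀ A H = diag(D₁, D₂)` block diagonal, and
`Ĥ = H (I + E)⁻¹` with `ε = ‖E‖ < 1`, then `Ĥᵀ A Ĥ = D - D E - Eᵀ D + Φ₂` with
`‖Φ₂‖ ≤ χ(ε) ‖A‖ ε²`, where `χ(ε) = (3 - 2ε)/(1 - ε)²`. -/
theorem stmt7 {k m : ℕ}
    (A H E : Matrix (Fin k ⊕ Fin m) (Fin k ⊕ Fin m) ℝ)
    (D₁ : Matrix (Fin k) (Fin k) ℝ) (D₂ : Matrix (Fin m) (Fin m) ℝ)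
    (hA : Aᵀ = A) (hOrth : Hᵀ * H = 1)
    (hDiag : Hᵀ * A * H = Matrix.fromBlocks D₁ 0 0 D₂)
    (hE : ‖E‖ < 1)
    (Hhat : Matrix (Fin k ⊕ Fin m) (Fin k ⊕ Fin m) ℝ) (hHhat : Hhat = H * (1 + E)⁻¹)
    (D : Matrix (Fin k ⊕ Fin m) (Fin k ⊕ Fin m) ℝ) (hD : D = Matrix.fromBlocks D₁ 0 0 D₂) :
    ∃ Φ₂ : Matrix (Fin k ⊕ Fin m) (Fin k ⊕ Fin m) ℝ,
      Hhatᵀ * A * Hhat = D - D * E - Eᵀ * D + Φ₂ ∧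
      ‖Φ₂‖ ≤ (3 - 2 * ‖E‖) / (1 - ‖E‖) ^ 2 * ‖A‖ * ‖E‖ ^ 2 := by
  set F : Matrix (Fin k ⊕ Fin m) (Fin k ⊕ Fin m) ℝ := (1 + E)⁻¹ with hF
  -- invertibility of 1 + E
  have hUnit : IsUnit (1 + E) := by
    have h' : ‖-E‖ < 1 := by simpa using hE
    have := (Units.oneSub (-E) h').isUnit
    simpa [sub_neg_eq_add] using this
  have hDet : IsUnit (1 + E).det := (Matrix.isUnit_iff_isUnit_det _).mp hUnit
  have hFr : (1 + E) * F = 1 := Matrix.mul_nonsing_inv _ hDet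
  -- norm facts
  have hone : ‖(1 : Matrix (Fin k ⊕ Fin m) (Fin k ⊕ Fin m) ℝ)‖ ≤ 1 := by
    rw [cstar_norm_def, _root_.map_one]
    exact ContinuousLinearMap.norm_id_le
  have hTnorm : ∀ M : Matrix (Fin k ⊕ Fin m) (Fin k ⊕ Fin m) ℝ, ‖Mᵀ‖ = ‖M‖ := fun M => by
    rw [← conjTranspose_eq_transpose_of_trivial, l2_opNorm_conjTranspose]
  have hεnn : (0:ℝ) ≤ ‖E‖ := norm_nonneg _
  have hεlt : (0:ℝ) < 1 - ‖E‖ := by linarith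
  -- ‖H‖ ≤ 1
  have hHnorm : ‖H‖ ≤ 1 := by
    have h2 : ‖Hᴴ * H‖ = ‖H‖ * ‖H‖ := l2_opNorm_conjTranspose_mul_self H
    rw [conjTranspose_eq_transpose_of_trivial, hOrth] at h2
    nlinarith [norm_nonneg H, norm_nonneg (1 : Matrix (Fin k ⊕ Fin m) (Fin k ⊕ Fin m) ℝ)]
  -- ‖D‖ ≤ ‖A‖
  have hDval : D = Hᵀ * A * H := by rw [hD, ← hDiag]
  have hDnorm : ‖D‖ ≤ ‖A‖ := by
    calc ‖D‖ = ‖Hᵀ * A * H‖ := by rw [hDval]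
    _ ≤ ‖Hᵀ * A‖ * ‖H‖ := l2_opNorm_mul _ _
    _ ≤ ‖Hᵀ‖ * ‖A‖ * ‖H‖ := by
        have h1 := l2_opNorm_mul Hᵀ A
        nlinarith [norm_nonneg H]
    _ ≤ ‖A‖ := by
        rw [hTnorm]
        nlinarith [mul_nonneg (sub_nonneg.mpr hHnorm) (norm_nonneg A),
          mul_nonneg (sub_nonneg.mpr hHnorm) (mul_nonneg (norm_nonneg A) (norm_nonneg H))]
  -- F = 1 - E * F
  have hFeq : F = 1 - E * F := by
    have h1 : F + E * F = 1 := by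
      calc F + E * F = (1 + E) * F := by noncomm_ring
      _ = 1 := hFr
    exact eq_sub_of_add_eq h1
  -- ‖F‖ bound
  have hFnorm : ‖F‖ * (1 - ‖E‖) ≤ 1 := by
    have h1 : ‖F‖ ≤ ‖(1 : Matrix (Fin k ⊕ Fin m) (Fin k ⊕ Fin m) ℝ)‖ + ‖E * F‖ := by
      conv_lhs => rw [hFeq]
      exact norm_sub_le _ _
    have h2 : ‖E * F‖ ≤ ‖E‖ * ‖F‖ := l2_opNorm_mul _ _
    nlinarith
  -- second order expansion: F = 1 - E + G with G = E * E * F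
  set G : Matrix (Fin k ⊕ Fin m) (Fin k ⊕ Fin m) ℝ := E * E * F with hG
  have h2 : E * F = E * (1 - E * F) := by conv_lhs => rw [hFeq]
  have hFeq2 : F = 1 - E + G := by
    rw [hG]
    nth_rewrite 1 [hFeq]
    rw [h2]
    noncomm_ring
  have hGnorm : ‖G‖ * (1 - ‖E‖) ≤ ‖E‖ ^ 2 := by
    have h1 : ‖G‖ ≤ ‖E‖ * ‖E‖ * ‖F‖ := by
      calc ‖G‖ ≤ ‖E * E‖ * ‖F‖ := l2_opNorm_mul _ _
      _ ≤ ‖E‖ * ‖E‖ * ‖F‖ := by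
          have := l2_opNorm_mul E E
          nlinarith [norm_nonneg F]
    nlinarith [norm_nonneg F, norm_nonneg G]
  -- define Φ₂
  refine ⟨Fᵀ * D * F - (D - D * E - Eᵀ * D), ?_, ?_⟩
  · have key : Hhatᵀ * A * Hhat = Fᵀ * D * F := by
      rw [hHhat, hDval, transpose_mul]
      noncomm_ring
    rw [key]; noncomm_ring
  · -- norm bound
    have hexp : Fᵀ * D * F - (D - D * E - Eᵀ * D) =
        D * G + Eᵀ * D * E - Eᵀ * D * G + Gᵀ * D - Gᵀ * D * E + Gᵀ * D * G := by
      rw [hFeq2, transpose_add, transpose_sub, transpose_one]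
      noncomm_ring
    rw [hexp]
    set ε := ‖E‖
    set g := ‖G‖
    set d := ‖D‖
    have hgnn : (0:ℝ) ≤ g := norm_nonneg _
    have hdnn : (0:ℝ) ≤ d := norm_nonneg _
    have hann : (0:ℝ) ≤ ‖A‖ := norm_nonneg _
    have hGT : ‖Gᵀ‖ = g := hTnorm G
    have hET : ‖Eᵀ‖ = ε := hTnorm E
    have bound : ‖D * G + Eᵀ * D * E - Eᵀ * D * G + Gᵀ * D - Gᵀ * D * E + Gᵀ * D * G‖ ≤
        d * g + ε * d * ε + ε * d * g + g * d + g * d * ε + g * d * g := by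
      have n1 : ‖D * G‖ ≤ d * g := l2_opNorm_mul _ _
      have n2 : ‖Eᵀ * D * E‖ ≤ ε * d * ε := by
        calc ‖Eᵀ * D * E‖ ≤ ‖Eᵀ * D‖ * ε := l2_opNorm_mul _ _
        _ ≤ ε * d * ε := by
            have := l2_opNorm_mul Eᵀ D
            rw [hET] at this
            nlinarith
      have n3 : ‖Eᵀ * D * G‖ ≤ ε * d * g := by
        calc ‖Eᵀ * D * G‖ ≤ ‖Eᵀ * D‖ * g := l2_opNorm_mul _ _
        _ ≤ ε * d * g := by
            have := l2_opNorm_mul Eᵀ D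
            rw [hET] at this
            nlinarith
      have n4 : ‖Gᵀ * D‖ ≤ g * d := by
        have := l2_opNorm_mul Gᵀ D
        rw [hGT] at this
        exact this
      have n5 : ‖Gᵀ * D * E‖ ≤ g * d * ε := by
        calc ‖Gᵀ * D * E‖ ≤ ‖Gᵀ * D‖ * ε := l2_opNorm_mul _ _
        _ ≤ g * d * ε := by nlinarith
      have n6 : ‖Gᵀ * D * G‖ ≤ g * d * g := by
        calc ‖Gᵀ * D * G‖ ≤ ‖Gᵀ * D‖ * g := l2_opNorm_mul _ _
        _ ≤ g * d * g := by nlinarith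
      calc ‖D * G + Eᵀ * D * E - Eᵀ * D * G + Gᵀ * D - Gᵀ * D * E + Gᵀ * D * G‖
          ≤ ‖D * G + Eᵀ * D * E - Eᵀ * D * G + Gᵀ * D - Gᵀ * D * E‖ + ‖Gᵀ * D * G‖ :=
            norm_add_le _ _
        _ ≤ ‖D * G + Eᵀ * D * E - Eᵀ * D * G + Gᵀ * D‖ + ‖Gᵀ * D * E‖ + ‖Gᵀ * D * G‖ := by
            have := norm_sub_le (D * G + Eᵀ * D * E - Eᵀ * D * G + Gᵀ * D) (Gᵀ * D * E)
            linarith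
        _ ≤ ‖D * G + Eᵀ * D * E - Eᵀ * D * G‖ + ‖Gᵀ * D‖ + ‖Gᵀ * D * E‖ + ‖Gᵀ * D * G‖ := by
            have := norm_add_le (D * G + Eᵀ * D * E - Eᵀ * D * G) (Gᵀ * D)
            linarith
        _ ≤ ‖D * G + Eᵀ * D * E‖ + ‖Eᵀ * D * G‖ + ‖Gᵀ * D‖ + ‖Gᵀ * D * E‖ + ‖Gᵀ * D * G‖ := by
            have := norm_sub_le (D * G + Eᵀ * D * E) (Eᵀ * D * G)
            linarith
        _ ≤ ‖D * G‖ + ‖Eᵀ * D * E‖ + ‖Eᵀ * D * G‖ + ‖Gᵀ * D‖ + ‖Gᵀ * D * E‖ + ‖Gᵀ * D * G‖ := by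
            have := norm_add_le (D * G) (Eᵀ * D * E)
            linarith
        _ ≤ d * g + ε * d * ε + ε * d * g + g * d + g * d * ε + g * d * g := by linarith
    refine bound.trans ?_
    rw [div_mul_eq_mul_div, div_mul_eq_mul_div, le_div_iff₀ (by positivity)]
    have htnn : 0 ≤ g * (1 - ε) := mul_nonneg hgnn (le_of_lt hεlt)
    have hsq : (g * (1 - ε)) ^ 2 ≤ (ε ^ 2) ^ 2 := by nlinarith
    have hfac : (0:ℝ) ≤ 1 - ε ^ 2 := by nlinarith
    have b1 : d * (g * (1 - ε)) * (1 - ε ^ 2) ≤ d * ε ^ 2 * (1 - ε ^ 2) := by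
      have := mul_le_mul_of_nonneg_left hGnorm hdnn
      nlinarith
    have b2 : d * (g * (1 - ε)) ^ 2 ≤ d * (ε ^ 2) ^ 2 :=
      mul_le_mul_of_nonneg_left hsq hdnn
    have key : (d * g + ε * d * ε + ε * d * g + g * d + g * d * ε + g * d * g) * (1-ε)^2 ≤
        (3 - 2*ε) * ‖A‖ * ε^2 := by
      have e1 : (d * g + ε * d * ε + ε * d * g + g * d + g * d * ε + g * d * g) * (1-ε)^2 =
          d * ε^2 * (1-ε)^2 + 2 * (d * (g * (1-ε)) * (1 - ε^2)) + d * (g * (1-ε))^2 := by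
        ring
      have e2 : d * ε^2 * (1-ε)^2 + 2 * (d * ε^2 * (1 - ε^2)) + d * (ε^2)^2 =
          (3 - 2*ε) * d * ε^2 := by ring
      have hc : (0:ℝ) ≤ (3 - 2*ε) * ε^2 := by nlinarith [sq_nonneg ε]
      have b3 : (3 - 2*ε) * d * ε^2 ≤ (3 - 2*ε) * ‖A‖ * ε^2 := by
        have h := mul_le_mul_of_nonneg_left hDnorm hc
        nlinarith
      linarith
    linarith [key]
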